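/- For a real number p, the power sequence (k^p)_{k∈ℕ} belongs to X if and only if p < 1; moreover, for every p < 1, the X-norm of (k^p)_{k∈ℕ} equals 1. -/

import Mathlib

open Filter Topology

/-- Membership in `X` (0-based indexing: `x k` is the paper's `x_{k+1}`). -/
def MemX (x : ℕ → ℝ) : Prop :=
  Summable (fun k : ℕ => |x (k + 1) / ((k : ℝ) + 2) - x k / ((k : ℝ) + 1)|) ∧
  Tendsto (fun k : ℕ => x k / ((k : ℝ) + 1)) atTop (𝓝 0)

/-- The norm of `X`. -/
noncomputable def normX (x : ℕ → ℝ) : ℝ :=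
  ∑' k : ℕ, |x (k + 1) / ((k : ℝ) + 2) - x k / ((k : ℝ) + 1)|

theorem stmt_1 (p : ℝ) :
    (MemX (fun k : ℕ => ((k : ℝ) + 1) ^ p) ↔ p < 1) ∧
    (p < 1 → normX (fun k : ℕ => ((k : ℝ) + 1) ^ p) = 1) := by
  set f : ℕ → ℝ := fun k => ((k : ℝ) + 1) ^ (p - 1) with hf
  have hpos : ∀ k : ℕ, (0:ℝ) < (k:ℝ) + 1 := fun k => by positivity
  have keyR : ∀ x : ℝ, 0 < x → x ^ p / x = x ^ (p - 1) := by
    intro x hx; rw [Real.rpow_sub hx, Real.rpow_one]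
  have key : ∀ k : ℕ, ((k:ℝ)+1)^p / ((k:ℝ)+1) = f k := by
    intro k
    show _ = ((k:ℝ)+1) ^ (p - 1)
    exact keyR _ (hpos k)
  have hf1 : ∀ k : ℕ, f (k+1) = ((k:ℝ)+2) ^ (p - 1) := by
    intro k
    show ((((k+1:ℕ)):ℝ)+1) ^ (p-1) = _
    push_cast
    rw [show (k:ℝ)+1+1 = (k:ℝ)+2 by ring]
  have htermfun : (fun k : ℕ => |((fun k : ℕ => ((k : ℝ) + 1) ^ p) (k + 1)) / ((k : ℝ) + 2)
        - ((fun k : ℕ => ((k : ℝ) + 1) ^ p) k) / ((k : ℝ) + 1)|)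
      = fun k => |f (k+1) - f k| := by
    funext k
    show |((((k+1:ℕ)):ℝ)+1)^p / ((k:ℝ)+2) - ((k:ℝ)+1)^p / ((k:ℝ)+1)| = _
    push_cast
    rw [show (k:ℝ)+1+1 = (k:ℝ)+2 by ring, keyR _ (by positivity : (0:ℝ) < (k:ℝ)+2),
      key k, ← hf1 k]
  have htendfun : (fun k : ℕ => ((fun k : ℕ => ((k : ℝ) + 1) ^ p) k) / ((k : ℝ) + 1)) = f := by
    funext k; exact key k
  have htend_f : p < 1 → Tendsto f atTop (𝓝 0) := by
    intro hp
    have h1 : Tendsto (fun k : ℕ => (k:ℝ) + 1) atTop atTop :=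
      tendsto_atTop_add_const_right _ 1 tendsto_natCast_atTop_atTop
    have h2 : Tendsto (fun x : ℝ => x ^ (-(1 - p))) atTop (𝓝 0) :=
      tendsto_rpow_neg_atTop (by linarith)
    have := h2.comp h1
    simpa [hf, Function.comp_def, show -(1-p) = p - 1 by ring] using this
  have hanti : p < 1 → ∀ k : ℕ, f (k+1) ≤ f k := by
    intro hp k
    rw [hf1 k]
    exact Real.rpow_le_rpow_of_nonpos (hpos k) (by linarith) (by linarith)
  have hsum1 : p < 1 → HasSum (fun k => |f (k+1) - f k|) 1 := by
    intro hp
    have habs : ∀ k : ℕ, |f (k+1) - f k| = f k - f (k+1) := by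
      intro k
      rw [abs_sub_comm, abs_of_nonneg (by linarith [hanti hp k])]
    have hpart : ∀ n : ℕ, ∑ i ∈ Finset.range n, |f (i+1) - f i| = f 0 - f n := by
      intro n
      rw [Finset.sum_congr rfl fun i _ => habs i, Finset.sum_range_sub' f n]
    have hsum : Summable (fun k => |f (k+1) - f k|) := by
      apply summable_of_sum_range_le (c := 1) (fun k => abs_nonneg _)
      intro n
      rw [hpart n]
      have h0 : (0:ℝ) ≤ f n := Real.rpow_nonneg (by positivity) _
      have : f 0 = 1 := by simp [hf]
      linarith
    rw [hsum.hasSum_iff_tendsto_nat]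
    have heq : (fun n => ∑ i ∈ Finset.range n, |f (i+1) - f i|) = fun n => f 0 - f n := by
      funext n; exact hpart n
    rw [heq]
    have := (tendsto_const_nhds (x := f 0) (f := atTop (α := ℕ))).sub (htend_f hp)
    simpa [hf] using this
  constructor
  · constructor
    · rintro ⟨hsum, htend⟩
      rw [htendfun] at htend
      by_contra h
      push_neg at h
      have h1 : ∀ k : ℕ, (1:ℝ) ≤ f k := by
        intro k
        exact Real.one_le_rpow (by linarith [Nat.cast_nonneg (α := ℝ) k]) (by linarith)
      have := ge_of_tendsto' htend h1
      linarith
    · intro hp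
      refine ⟨?_, by rw [htendfun]; exact htend_f hp⟩
      rw [htermfun]
      exact (hsum1 hp).summable
  · intro hp
    unfold normX
    rw [htermfun]
    exact (hsum1 hp).tsum_eq
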